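/- Key summation lemma (Lemma 5.1): For positive integers l, m, n, p, Σ q^{x_1 + ... + x_m + y} = [p + l(n+m)]_q · [p+m−1 choose m]_q, where the sum is over all integers x_1,...,x_m,y satisfying 0 ≤ x_1 ≤ ... ≤ x_m ≤ p + min(x_1, l−1) and n·max(0, x_m − p) ≤ y ≤ p − 1 + n·min(l, x_1). -/
import Mathlib

set_option maxHeartbeats 1600000

open Finset

noncomputable def q : RatFunc ℚ := RatFunc.X

noncomputable def qInt (n : ℕ) : RatFunc ℚ := ∑ i ∈ Finset.range n, q ^ i

noncomputable def qPoch (n : ℕ) : RatFunc ℚ := ∏ i ∈ Finset.range n, (1 - q ^ (i + 1))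

noncomputable def qb (n m : ℕ) : RatFunc ℚ := qPoch n / (qPoch m * qPoch (n - m))

lemma qpow_ne (i : ℕ) : (q : RatFunc ℚ) ^ (i+1) ≠ 1 := by
  unfold q
  rw [← RatFunc.algebraMap_X (K := ℚ), ← map_pow, ← map_one (algebraMap (Polynomial ℚ) (RatFunc ℚ))]
  intro h
  have h2 := RatFunc.algebraMap_injective ℚ h
  have := congrArg Polynomial.natDegree h2
  simp [Polynomial.natDegree_X_pow] at this

lemma one_sub_q_pow_ne (i : ℕ) : (1 : RatFunc ℚ) - q ^ (i+1) ≠ 0 := by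
  intro h; exact qpow_ne i (by linear_combination -h)

lemma q_sub_one_ne : (q : RatFunc ℚ) - 1 ≠ 0 := by
  have := one_sub_q_pow_ne 0
  intro h
  apply this
  rw [pow_one]
  linear_combination -h

lemma qPoch_ne_zero (n : ℕ) : qPoch n ≠ 0 := by
  unfold qPoch
  exact Finset.prod_ne_zero_iff.2 fun i _ => one_sub_q_pow_ne i

lemma qPoch_succ (n : ℕ) : qPoch (n+1) = qPoch n * (1 - q^(n+1)) := by
  unfold qPoch; rw [Finset.prod_range_succ]

lemma qPoch_zero : qPoch 0 = 1 := by unfold qPoch; simp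

lemma qb_zero (n : ℕ) : qb n 0 = 1 := by
  unfold qb; rw [qPoch_zero]; simp [div_self (qPoch_ne_zero n)]

lemma qb_self (n : ℕ) : qb n n = 1 := by
  unfold qb; simp [qPoch_zero, div_self (qPoch_ne_zero n)]

lemma qInt_geom (n : ℕ) : (q - 1) * qInt n = q ^ n - 1 := by
  unfold qInt
  rw [mul_comm, geom_sum_mul]

lemma qb_pascal (k d : ℕ) :
    qb (k+d+2) (k+1) = qb (k+d+1) k + q^(k+1) * qb (k+d+1) (k+1) := by
  unfold qb
  have h1 : k+d+2-(k+1) = d+1 := by omega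
  have h2 : k+d+1-k = d+1 := by omega
  have h3 : k+d+1-(k+1) = d := by omega
  rw [h1, h2, h3, qPoch_succ (k+d+1), qPoch_succ k, qPoch_succ d]
  have nk := qPoch_ne_zero k
  have nd := qPoch_ne_zero d
  have nkd := qPoch_ne_zero (k+d+1)
  have e1 := one_sub_q_pow_ne k
  have e2 := one_sub_q_pow_ne d
  field_simp
  ring

noncomputable def S (p m : ℕ) : RatFunc ℚ :=
  ∑ z ∈ (Finset.univ : Finset (Fin m → Fin p)).filter (fun z => Monotone z),
    q ^ (∑ i, (z i).val)

lemma S_zero (p : ℕ) : S p 0 = 1 := by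
  unfold S
  have h : ((Finset.univ : Finset (Fin 0 → Fin p)).filter (fun z => Monotone z)) = univ := by
    apply Finset.filter_true_of_mem
    intro z _ a b _
    exact isEmptyElim a
  rw [h]
  simp

lemma S_one (m : ℕ) : S 1 m = 1 := by
  unfold S
  have h1 : ((Finset.univ : Finset (Fin m → Fin 1)).filter (fun z => Monotone z)) = {fun _ => 0} := by
    apply Finset.eq_singleton_iff_unique_mem.2
    refine ⟨by simp [monotone_const], fun z _ => funext fun i => Subsingleton.elim _ _⟩
  rw [h1]
  simp

lemma mono_of_val {N M : ℕ} {f : Fin N → Fin M}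
    (h : ∀ i j : Fin N, (i : ℕ) ≤ (j : ℕ) → (f i).val ≤ (f j).val) : Monotone f :=
  fun a b hab => h a b hab

lemma mono_val {N M : ℕ} {f : Fin N → Fin M} (h : Monotone f) (i j : Fin N)
    (hij : (i : ℕ) ≤ (j : ℕ)) : (f i).val ≤ (f j).val :=
  h (show i ≤ j from hij)

lemma S_rec (p m : ℕ) : S (p+1) (m+1) = S (p+1) m + q^(m+1) * S p (m+1) := by
  unfold S
  rw [← Finset.sum_filter_add_sum_filter_not
    ((Finset.univ : Finset (Fin (m+1) → Fin (p+1))).filter (fun z => Monotone z))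
    (fun z => z 0 = 0)]
  congr 1
  · -- z 0 = 0 case ↔ S (p+1) m
    refine Finset.sum_bij'
      (fun z _ => (fun k : Fin m => z ⟨k.val + 1, by omega⟩ : Fin m → Fin (p+1)))
      (fun w _ => (fun k : Fin (m+1) => if h : (k : ℕ) = 0 then (0 : Fin (p+1))
        else w ⟨k.val - 1, by omega⟩ : Fin (m+1) → Fin (p+1))) ?_ ?_ ?_ ?_ ?_
    · intro z hz
      simp only [Finset.mem_filter, Finset.mem_univ, true_and] at hz ⊢
      exact mono_of_val fun i j hij => mono_val hz.1 _ _ (by simp; omega)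
    · intro w hw
      simp only [Finset.mem_filter, Finset.mem_univ, true_and] at hw ⊢
      refine ⟨mono_of_val fun i j hij => ?_, by simp⟩
      by_cases hi : (i : ℕ) = 0
      · simp [hi]
      · have hj : (j : ℕ) ≠ 0 := by omega
        simp only [hi, hj, dif_neg, not_false_iff]
        exact mono_val hw _ _ (by simp; omega)
    · intro z hz
      simp only [Finset.mem_filter, Finset.mem_univ, true_and] at hz
      funext k
      by_cases hk : (k : ℕ) = 0
      · have : k = 0 := Fin.ext hk
        simp [hk, this, hz.2]
      · simp only [hk, dif_neg, not_false_iff]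
        congr 1
        exact Fin.ext (by simp; omega)
    · intro w hw
      funext k
      simp
    · intro z hz
      simp only [Finset.mem_filter, Finset.mem_univ, true_and] at hz
      congr 1
      rw [Fin.sum_univ_succ, hz.2]
      simp only [Fin.val_zero, zero_add]
      apply Finset.sum_congr rfl
      intro k _
      congr 1
  · -- z 0 ≠ 0 case
    have key : ∀ (z : Fin (m+1) → Fin (p+1)), Monotone z → ¬(z 0 = 0) →
        ∀ k : Fin (m+1), 1 ≤ (z k).val := by
      intro z hz h0 k
      have h1 : 1 ≤ (z 0).val := by
        rcases Nat.eq_zero_or_pos (z 0).val with h | h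
        · exact absurd (Fin.ext h) h0
        · exact h
      exact le_trans h1 (mono_val hz 0 k (by simp))
    rw [Finset.mul_sum]
    refine Finset.sum_bij'
      (fun z hz => (fun k => (⟨(z k).val - 1, by
        have h1 := (Finset.mem_filter.mp hz).2
        have h2 := (Finset.mem_filter.mp (Finset.mem_filter.mp hz).1).2
        have h3 := key z h2 h1 k
        have := (z k).isLt; omega⟩ : Fin p)
        : Fin (m+1) → Fin p))
      (fun w hw => (fun k => (⟨(w k).val + 1, by have := (w k).isLt; omega⟩ : Fin (p+1))
        : Fin (m+1) → Fin (p+1))) ?_ ?_ ?_ ?_ ?_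
    · intro z hz
      simp only [Finset.mem_filter, Finset.mem_univ, true_and] at hz ⊢
      exact mono_of_val fun i j hij => by
        have := mono_val hz.1 i j hij; simp; omega
    · intro w hw
      simp only [Finset.mem_filter, Finset.mem_univ, true_and] at hw ⊢
      refine ⟨mono_of_val fun i j hij => by
        have := mono_val hw i j hij; simp; omega, by simp [Fin.ext_iff]⟩
    · intro z hz
      simp only [Finset.mem_filter, Finset.mem_univ, true_and] at hz
      have hk := key z hz.1 hz.2
      funext k
      exact Fin.ext (by have := hk k; simp; omega)
    · intro w hw
      funext k
      exact Fin.ext (by simp)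
    · intro z hz
      simp only [Finset.mem_filter, Finset.mem_univ, true_and] at hz
      have hk := key z hz.1 hz.2
      rw [← pow_add]
      congr 1
      have : ∀ k : Fin (m+1), (z k).val = ((z k).val - 1) + 1 := fun k => by
        have := hk k; omega
      calc ∑ i, (z i).val = ∑ i, (((z i).val - 1) + 1) := Finset.sum_congr rfl fun k _ => this k
        _ = (∑ i : Fin (m+1), ((z i).val - 1)) + (m+1) := by
            rw [Finset.sum_add_distrib]; simp
        _ = m + 1 + ∑ i : Fin (m+1), ((z i).val - 1) := by ring

def Tmap (l p m₁ : ℕ) (x : Fin (m₁+1) → Fin (p+l)) : Fin (m₁+1) → Fin (p+l) :=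
  fun k => if h : (k:ℕ) + 1 < m₁ + 1 then x ⟨k.val + 1, h⟩
    else ⟨min ((x 0).val + p) (p+l-1), by have := (x 0).isLt; omega⟩

def Umap (l p m₁ : ℕ) (x : Fin (m₁+1) → Fin (p+l)) : Fin (m₁+1) → Fin (p+l) :=
  fun k => if h : (k:ℕ) = 0 then ⟨min ((x (Fin.last m₁)).val - p) (p+l-1), by
      have := (x 0).isLt; omega⟩
    else x ⟨k.val - 1, by omega⟩

lemma Tmap_lt {l p m₁ : ℕ} (x : Fin (m₁+1) → Fin (p+l)) (k : Fin (m₁+1))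
    (h : (k:ℕ) + 1 < m₁ + 1) : Tmap l p m₁ x k = x ⟨k.val + 1, h⟩ := by
  unfold Tmap; rw [dif_pos h]

lemma Tmap_last {l p m₁ : ℕ} (x : Fin (m₁+1) → Fin (p+l)) (k : Fin (m₁+1))
    (h : ¬ ((k:ℕ) + 1 < m₁ + 1)) :
    (Tmap l p m₁ x k).val = min ((x 0).val + p) (p+l-1) := by
  unfold Tmap; rw [dif_neg h]

lemma Umap_zero {l p m₁ : ℕ} (x : Fin (m₁+1) → Fin (p+l)) (k : Fin (m₁+1))
    (h : (k:ℕ) = 0) :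
    (Umap l p m₁ x k).val = min ((x (Fin.last m₁)).val - p) (p+l-1) := by
  unfold Umap; rw [dif_pos h]

lemma Umap_pos {l p m₁ : ℕ} (x : Fin (m₁+1) → Fin (p+l)) (k : Fin (m₁+1))
    (h : ¬ ((k:ℕ) = 0)) : Umap l p m₁ x k = x ⟨k.val - 1, by omega⟩ := by
  unfold Umap; rw [dif_neg h]

lemma sum_Tmap {l p m₁ : ℕ} (x : Fin (m₁+1) → Fin (p+l)) (hx0 : (x 0).val + p ≤ p + l - 1) :
    (x 0).val + ∑ i, (Tmap l p m₁ x i).val = (∑ i, (x i).val) + ((x 0).val + p) := by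
  rw [Fin.sum_univ_castSucc (f := fun i => (Tmap l p m₁ x i).val),
      Fin.sum_univ_succ (f := fun i => (x i).val)]
  have h1 : ∀ j : Fin m₁, (Tmap l p m₁ x (Fin.castSucc j)).val = (x (Fin.succ j)).val := by
    intro j
    rw [Tmap_lt x (Fin.castSucc j) (by simp)]
    congr 1
  have h2 : (Tmap l p m₁ x (Fin.last m₁)).val = (x 0).val + p := by
    rw [Tmap_last x (Fin.last m₁) (by simp)]
    omega
  rw [h2, Finset.sum_congr rfl (fun j _ => h1 j)]
  ring

-- K1 : rotation bijection
lemma K1 (l n p m₁ : ℕ) (hl : 0 < l) (hp : 0 < p) :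
    ∑ x ∈ (((Finset.univ : Finset (Fin (m₁+1) → Fin (p+l))).filter
        (fun x => Monotone x ∧ (x (Fin.last m₁)).val ≤ p + min (x 0).val (l-1))).filter
        (fun x => (x 0).val ≤ l - 1)),
      q ^ ((∑ i, (x i).val) + p + n * min l (x 0).val) =
    ∑ x ∈ (((Finset.univ : Finset (Fin (m₁+1) → Fin (p+l))).filter
        (fun x => Monotone x ∧ (x (Fin.last m₁)).val ≤ p + min (x 0).val (l-1))).filter
        (fun x => p ≤ (x (Fin.last m₁)).val)),
      q ^ ((∑ i, (x i).val) + n * ((x (Fin.last m₁)).val - p)) := by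
  have hlastv : ((Fin.last m₁ : Fin (m₁+1)):ℕ) = m₁ := rfl
  have h0v : ((0 : Fin (m₁+1)):ℕ) = 0 := rfl
  refine Finset.sum_bij' (fun x _ => Tmap l p m₁ x) (fun x _ => Umap l p m₁ x) ?_ ?_ ?_ ?_ ?_
  · -- T maps into X_high
    intro x hx
    simp only [Finset.mem_filter, Finset.mem_univ, true_and] at hx
    obtain ⟨⟨hmono, hcon⟩, hpred⟩ := hx
    simp only [Finset.mem_filter, Finset.mem_univ, true_and]
    have hx01 : ∀ k : Fin (m₁+1), (x 0).val ≤ (x k).val :=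
      fun k => mono_val hmono 0 k (by simp)
    have hxlast : ∀ k : Fin (m₁+1), (x k).val ≤ (x (Fin.last m₁)).val :=
      fun k => mono_val hmono k (Fin.last m₁) (by have := k.isLt; simp [Fin.last]; omega)
    refine ⟨⟨mono_of_val fun i j hij => ?_, ?_⟩, ?_⟩
    · by_cases hi : (i:ℕ) + 1 < m₁ + 1
      · by_cases hj : (j:ℕ) + 1 < m₁ + 1
        · rw [Tmap_lt x i hi, Tmap_lt x j hj]
          exact mono_val hmono _ _ (by simp; omega)
        · rw [Tmap_lt x i hi, Tmap_last x j hj]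
          have := hxlast ⟨i.val + 1, hi⟩
          omega
      · have hj : ¬ ((j:ℕ) + 1 < m₁ + 1) := by omega
        rw [Tmap_last x i hi, Tmap_last x j hj]
    · -- constraint
      rw [Tmap_last x (Fin.last m₁) (by omega)]
      by_cases h00 : (0:ℕ) + 1 < m₁ + 1
      · rw [Tmap_lt x 0 (by omega)]
        have := hx01 ⟨((0 : Fin (m₁+1)):ℕ) + 1, by omega⟩
        omega
      · rw [Tmap_last x 0 (by omega)]
        omega
    · -- p ≤ last
      rw [Tmap_last x (Fin.last m₁) (by omega)]
      omega
  · -- U maps into X₁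
    intro x hx
    simp only [Finset.mem_filter, Finset.mem_univ, true_and] at hx
    obtain ⟨⟨hmono, hcon⟩, hpred⟩ := hx
    simp only [Finset.mem_filter, Finset.mem_univ, true_and]
    have hx01 : ∀ k : Fin (m₁+1), (x 0).val ≤ (x k).val :=
      fun k => mono_val hmono 0 k (by simp)
    have hxlast : ∀ k : Fin (m₁+1), (x k).val ≤ (x (Fin.last m₁)).val :=
      fun k => mono_val hmono k (Fin.last m₁) (by have := k.isLt; simp [Fin.last]; omega)
    have hll : (x (Fin.last m₁)).val < p + l := (x (Fin.last m₁)).isLt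
    refine ⟨⟨mono_of_val fun i j hij => ?_, ?_⟩, ?_⟩
    · by_cases hi : (i:ℕ) = 0
      · by_cases hj : (j:ℕ) = 0
        · rw [Umap_zero x i hi, Umap_zero x j hj]
        · rw [Umap_zero x i hi, Umap_pos x j hj]
          have := hx01 ⟨j.val - 1, by omega⟩
          omega
      · have hj : ¬ ((j:ℕ) = 0) := by omega
        rw [Umap_pos x i hi, Umap_pos x j hj]
        exact mono_val hmono _ _ (by simp; omega)
    · -- constraint
      by_cases hm₁ : m₁ = 0
      · rw [Umap_zero x (Fin.last m₁) (by omega), Umap_zero x 0 (by omega)]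
        omega
      · rw [Umap_pos x (Fin.last m₁) (by omega), Umap_zero x 0 (by omega)]
        have := hxlast ⟨(Fin.last m₁ : Fin (m₁+1)).val - 1, by omega⟩
        omega
    · -- first ≤ l - 1
      rw [Umap_zero x 0 (by omega)]
      omega
  · -- left inverse
    intro x hx
    simp only [Finset.mem_filter, Finset.mem_univ, true_and] at hx
    obtain ⟨⟨hmono, hcon⟩, hpred⟩ := hx
    show Umap l p m₁ (Tmap l p m₁ x) = x
    funext k
    by_cases hk : (k:ℕ) = 0
    · refine Fin.ext ?_
      rw [Umap_zero (Tmap l p m₁ x) k hk, Tmap_last x (Fin.last m₁) (by omega)]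
      have hk0 : k = 0 := Fin.ext hk
      rw [hk0]
      have := (x 0).isLt
      omega
    · rw [Umap_pos (Tmap l p m₁ x) k hk, Tmap_lt x _ (by simp; omega)]
      congr 1
      exact Fin.ext (by simp; omega)
  · -- right inverse
    intro x hx
    simp only [Finset.mem_filter, Finset.mem_univ, true_and] at hx
    obtain ⟨⟨hmono, hcon⟩, hpred⟩ := hx
    show Tmap l p m₁ (Umap l p m₁ x) = x
    funext k
    by_cases hk : (k:ℕ) + 1 < m₁ + 1
    · rw [Tmap_lt (Umap l p m₁ x) k hk, Umap_pos x _ (by simp)]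
      first
      | rfl
      | (congr 1; exact Fin.ext (by simp))
    · refine Fin.ext ?_
      rw [Tmap_last (Umap l p m₁ x) k hk, Umap_zero x 0 (by omega)]
      have hkl : k = Fin.last m₁ := Fin.ext (by have := k.isLt; simp [Fin.last]; omega)
      rw [hkl]
      have := (x (Fin.last m₁)).isLt
      omega
  · -- exponents
    intro x hx
    simp only [Finset.mem_filter, Finset.mem_univ, true_and] at hx
    obtain ⟨⟨hmono, hcon⟩, hpred⟩ := hx
    show q ^ ((∑ i, (x i).val) + p + n * min l (x 0).val)
      = q ^ ((∑ i, (Tmap l p m₁ x i).val) + n * ((Tmap l p m₁ x (Fin.last m₁)).val - p))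
    congr 1
    have hs := sum_Tmap x (by omega)
    have hTl : (Tmap l p m₁ x (Fin.last m₁)).val = (x 0).val + p := by
      rw [Tmap_last x (Fin.last m₁) (by omega)]; omega
    have hmin : min l (x 0).val = (x 0).val := by omega
    have hsub : (x 0).val + p - p = (x 0).val := by omega
    rw [hTl, hsub, hmin]
    omega

-- K3 : low part equals box sum
lemma K3 (l n p m₁ : ℕ) (hl : 0 < l) (hp : 0 < p) :
    ∑ x ∈ (((Finset.univ : Finset (Fin (m₁+1) → Fin (p+l))).filter
        (fun x => Monotone x ∧ (x (Fin.last m₁)).val ≤ p + min (x 0).val (l-1))).filter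
        (fun x => ¬ p ≤ (x (Fin.last m₁)).val)),
      q ^ ((∑ i, (x i).val) + n * ((x (Fin.last m₁)).val - p)) =
    ∑ w ∈ (Finset.univ : Finset (Fin (m₁+1) → Fin p)).filter (fun w => Monotone w),
      q ^ (∑ i, (w i).val) := by
  refine Finset.sum_bij'
    (fun x _ => (fun k => (⟨min (x k).val (p-1), by omega⟩ : Fin p) : Fin (m₁+1) → Fin p))
    (fun w _ => (fun k => (⟨(w k).val, by have := (w k).isLt; omega⟩ : Fin (p+l))
      : Fin (m₁+1) → Fin (p+l))) ?_ ?_ ?_ ?_ ?_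
  · intro x hx
    simp only [Finset.mem_filter, Finset.mem_univ, true_and] at hx ⊢
    obtain ⟨⟨hmono, hcon⟩, hpred⟩ := hx
    exact mono_of_val fun i j hij => by
      have := mono_val hmono i j hij; simp only; omega
  · intro w hw
    simp only [Finset.mem_filter, Finset.mem_univ, true_and] at hw ⊢
    have hwl : ∀ k, (w k).val < p := fun k => (w k).isLt
    refine ⟨⟨mono_of_val fun i j hij => by
      have := mono_val hw i j hij; simp only; omega, ?_⟩, ?_⟩
    · have := hwl (Fin.last m₁)
      omega
    · have := hwl (Fin.last m₁)
      omega
  · intro x hx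
    simp only [Finset.mem_filter, Finset.mem_univ, true_and] at hx
    obtain ⟨⟨hmono, hcon⟩, hpred⟩ := hx
    have hxk : ∀ k, (x k).val < p := fun k => by
      have := mono_val hmono k (Fin.last m₁) (by have := k.isLt; simp [Fin.last]; omega)
      omega
    funext k
    exact Fin.ext (by have := hxk k; simp only; omega)
  · intro w hw
    simp only [Finset.mem_filter, Finset.mem_univ, true_and] at hw
    have hwl : ∀ k, (w k).val < p := fun k => (w k).isLt
    funext k
    exact Fin.ext (by have := hwl k; simp only; omega)
  · intro x hx
    simp only [Finset.mem_filter, Finset.mem_univ, true_and] at hx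
    obtain ⟨⟨hmono, hcon⟩, hpred⟩ := hx
    have hxk : ∀ k, (x k).val < p := fun k => by
      have := mono_val hmono k (Fin.last m₁) (by have := k.isLt; simp [Fin.last]; omega)
      omega
    congr 1
    have hsub : n * ((x (Fin.last m₁)).val - p) = 0 := by
      have := hxk (Fin.last m₁)
      have : (x (Fin.last m₁)).val - p = 0 := by omega
      rw [this, Nat.mul_zero]
    rw [hsub, Nat.add_zero]
    apply Finset.sum_congr rfl
    intro k _
    have := hxk k
    simp only
    omega

-- K2 : high-first part equals q^P * box sum
lemma K2 (l n p m₁ : ℕ) (hl : 0 < l) (hp : 0 < p) :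
    ∑ x ∈ (((Finset.univ : Finset (Fin (m₁+1) → Fin (p+l))).filter
        (fun x => Monotone x ∧ (x (Fin.last m₁)).val ≤ p + min (x 0).val (l-1))).filter
        (fun x => ¬ (x 0).val ≤ l - 1)),
      q ^ ((∑ i, (x i).val) + p + n * min l (x 0).val) =
    q ^ (p + l * (n + (m₁+1))) *
    ∑ w ∈ (Finset.univ : Finset (Fin (m₁+1) → Fin p)).filter (fun w => Monotone w),
      q ^ (∑ i, (w i).val) := by
  rw [Finset.mul_sum]
  refine Finset.sum_bij'
    (fun x _ => (fun k => (⟨(x k).val - l, by have := (x k).isLt; omega⟩ : Fin p)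
      : Fin (m₁+1) → Fin p))
    (fun w _ => (fun k => (⟨(w k).val + l, by have := (w k).isLt; omega⟩ : Fin (p+l))
      : Fin (m₁+1) → Fin (p+l))) ?_ ?_ ?_ ?_ ?_
  · intro x hx
    simp only [Finset.mem_filter, Finset.mem_univ, true_and] at hx ⊢
    obtain ⟨⟨hmono, hcon⟩, hpred⟩ := hx
    exact mono_of_val fun i j hij => by
      have := mono_val hmono i j hij; simp only; omega
  · intro w hw
    simp only [Finset.mem_filter, Finset.mem_univ, true_and] at hw ⊢
    have hwl : ∀ k, (w k).val < p := fun k => (w k).isLt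
    refine ⟨⟨mono_of_val fun i j hij => by
      have := mono_val hw i j hij; simp only; omega, ?_⟩, ?_⟩
    · have := hwl (Fin.last m₁)
      omega
    · omega
  · intro x hx
    simp only [Finset.mem_filter, Finset.mem_univ, true_and] at hx
    obtain ⟨⟨hmono, hcon⟩, hpred⟩ := hx
    have hxk : ∀ k, l ≤ (x k).val := fun k => by
      have := mono_val hmono 0 k (by simp)
      omega
    funext k
    exact Fin.ext (by have := hxk k; simp only; omega)
  · intro w hw
    funext k
    exact Fin.ext (by simp only; omega)
  · intro x hx
    simp only [Finset.mem_filter, Finset.mem_univ, true_and] at hx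
    obtain ⟨⟨hmono, hcon⟩, hpred⟩ := hx
    have hxk : ∀ k, l ≤ (x k).val := fun k => by
      have := mono_val hmono 0 k (by simp)
      omega
    rw [← pow_add]
    congr 1
    have hsum : ∑ i : Fin (m₁+1), (x i).val
        = (∑ i : Fin (m₁+1), ((x i).val - l)) + (m₁+1) * l := by
      calc ∑ i : Fin (m₁+1), (x i).val = ∑ i : Fin (m₁+1), (((x i).val - l) + l) :=
            Finset.sum_congr rfl fun k _ => by have := hxk k; omega
        _ = (∑ i : Fin (m₁+1), ((x i).val - l)) + (m₁+1) * l := by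
            rw [Finset.sum_add_distrib, Finset.sum_const]
            simp [mul_comm]
    have hmin : min l (x 0).val = l := by omega
    have hP : p + l * (n + (m₁+1)) = p + n * l + (m₁+1) * l := by ring
    rw [hmin, hP, hsum]
    have : ∑ i : Fin (m₁+1), (((fun k => (⟨(x k).val - l, by have := (x k).isLt; omega⟩ : Fin p)) : Fin (m₁+1) → Fin p) i).val = ∑ i : Fin (m₁+1), ((x i).val - l) :=
      Finset.sum_congr rfl fun k _ => rfl
    rw [this]
    ring


lemma S_eq (p m : ℕ) : S (p+1) m = qb (p+m) m := by
  induction p generalizing m with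
  | zero =>
    rw [S_one]
    rw [Nat.zero_add]
    rw [qb_self]
  | succ p ih =>
    induction m with
    | zero => rw [S_zero, qb_zero]
    | succ m ihm =>
      rw [S_rec, ihm, ih (m+1)]
      have hpas := qb_pascal m p
      have e1 : p + 1 + (m + 1) = m + p + 2 := by ring
      have e2 : p + 1 + m = m + p + 1 := by ring
      have e3 : p + (m + 1) = m + p + 1 := by ring
      rw [e1, e2, e3, hpas]

theorem stmt10 (l m n p : ℕ) (hl : 0 < l) (hm : 0 < m) (hn : 0 < n) (hp : 0 < p) :
    ∑ x ∈ (Finset.univ : Finset (Fin m → Fin (p + l))).filter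
        (fun x => Monotone x ∧
          (x ⟨m - 1, by omega⟩).val ≤ p + min (x ⟨0, hm⟩).val (l - 1)),
      ∑ y ∈ Finset.Icc (n * ((x ⟨m - 1, by omega⟩).val - p))
          (p - 1 + n * min l (x ⟨0, hm⟩).val),
        q ^ ((∑ i : Fin m, (x i : ℕ)) + y) =
    qInt (p + l * (n + m)) * qb (p + m - 1) m := by
  obtain ⟨m₁, rfl⟩ : ∃ m₁, m = m₁ + 1 := ⟨m - 1, by omega⟩
  show
    ∑ x ∈ (Finset.univ : Finset (Fin (m₁+1) → Fin (p + l))).filter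
        (fun x => Monotone x ∧
          (x (Fin.last m₁)).val ≤ p + min (x 0).val (l - 1)),
      ∑ y ∈ Finset.Icc (n * ((x (Fin.last m₁)).val - p))
          (p - 1 + n * min l (x 0).val),
        q ^ ((∑ i : Fin (m₁+1), (x i : ℕ)) + y) =
    qInt (p + l * (n + (m₁+1))) * qb (p + (m₁+1) - 1) (m₁+1)
  apply mul_left_cancel₀ q_sub_one_ne
  -- rewrite each inner sum
  rw [Finset.mul_sum]
  have hinner : ∀ x ∈ (Finset.univ : Finset (Fin (m₁+1) → Fin (p + l))).filter
        (fun x => Monotone x ∧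
          (x (Fin.last m₁)).val ≤ p + min (x 0).val (l - 1)),
      (q - 1) * ∑ y ∈ Finset.Icc (n * ((x (Fin.last m₁)).val - p))
          (p - 1 + n * min l (x 0).val),
        q ^ ((∑ i : Fin (m₁+1), (x i : ℕ)) + y)
      = q ^ ((∑ i, (x i).val) + p + n * min l (x 0).val)
        - q ^ ((∑ i, (x i).val) + n * ((x (Fin.last m₁)).val - p)) := by
    intro x hx
    simp only [Finset.mem_filter, Finset.mem_univ, true_and] at hx
    obtain ⟨hmono, hcon⟩ := hx
    set a := n * ((x (Fin.last m₁)).val - p) with ha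
    set b := p - 1 + n * min l (x 0).val with hb
    have hab : a ≤ b := by
      have h1 : (x (Fin.last m₁)).val - p ≤ min l (x 0).val := by
        have := mono_val hmono 0 (Fin.last m₁) (by simp)
        omega
      have h2 : n * ((x (Fin.last m₁)).val - p) ≤ n * min l (x 0).val :=
        Nat.mul_le_mul_left n h1
      omega
    have hicc : Finset.Icc a b = Finset.Ico a (b+1) := by
      rw [Finset.Ico_add_one_right_eq_Icc]
    rw [hicc]
    have hsplit : ∀ y ∈ Finset.Ico a (b+1),
        q ^ ((∑ i : Fin (m₁+1), (x i : ℕ)) + y) = q ^ (∑ i : Fin (m₁+1), (x i : ℕ)) * q ^ y :=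
      fun y _ => pow_add q _ _
    rw [Finset.sum_congr rfl hsplit, ← Finset.mul_sum]
    rw [Finset.sum_Ico_eq_sub (fun y => q ^ y) (by omega : a ≤ b + 1)]
    have hr1 : ∑ y ∈ Finset.range (b+1), q ^ y = qInt (b+1) := rfl
    have hr2 : ∑ y ∈ Finset.range a, q ^ y = qInt a := rfl
    rw [hr1, hr2]
    have expand : (q - 1) * (q ^ (∑ i : Fin (m₁+1), (x i : ℕ)) * (qInt (b+1) - qInt a))
        = q ^ (∑ i : Fin (m₁+1), (x i : ℕ)) * ((q-1) * qInt (b+1) - (q-1) * qInt a) := by ring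
    rw [expand, qInt_geom, qInt_geom]
    have hb1 : b + 1 = p + n * min l (x 0).val := by omega
    rw [hb1]
    rw [show (∑ i : Fin (m₁+1), (x i : ℕ)) + p + n * min l (x 0).val
        = (∑ i : Fin (m₁+1), (x i : ℕ)) + (p + n * min l (x 0).val) from by ring]
    rw [pow_add q (∑ i : Fin (m₁+1), (x i : ℕ)) (p + n * min l (x 0).val),
        pow_add q (∑ i : Fin (m₁+1), (x i : ℕ)) a]
    ring
  rw [Finset.sum_congr rfl hinner, Finset.sum_sub_distrib]
  -- split the two big sums
  rw [← Finset.sum_filter_add_sum_filter_not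
    ((Finset.univ : Finset (Fin (m₁+1) → Fin (p + l))).filter
      (fun x => Monotone x ∧ (x (Fin.last m₁)).val ≤ p + min (x 0).val (l - 1)))
    (fun x => (x 0).val ≤ l - 1)
    (fun x => q ^ ((∑ i, (x i).val) + p + n * min l (x 0).val))]
  rw [← Finset.sum_filter_add_sum_filter_not
    ((Finset.univ : Finset (Fin (m₁+1) → Fin (p + l))).filter
      (fun x => Monotone x ∧ (x (Fin.last m₁)).val ≤ p + min (x 0).val (l - 1)))
    (fun x => p ≤ (x (Fin.last m₁)).val)
    (fun x => q ^ ((∑ i, (x i).val) + n * ((x (Fin.last m₁)).val - p)))]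
  rw [K1 l n p m₁ hl hp, K2 l n p m₁ hl hp, K3 l n p m₁ hl hp]
  -- now identify box sum with S p (m₁+1)
  have hS : ∑ w ∈ (Finset.univ : Finset (Fin (m₁+1) → Fin p)).filter (fun w => Monotone w),
      q ^ (∑ i, (w i).val) = S p (m₁+1) := rfl
  rw [hS]
  obtain ⟨p₁, rfl⟩ : ∃ p₁, p = p₁ + 1 := ⟨p - 1, by omega⟩
  have hqb : qb (p₁ + 1 + (m₁ + 1) - 1) (m₁+1) = S (p₁+1) (m₁+1) := by
    rw [S_eq p₁ (m₁+1)]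
    congr 1
    omega
  rw [hqb]
  rw [show (q - 1) * (qInt (p₁ + 1 + l * (n + (m₁ + 1))) * S (p₁+1) (m₁+1))
      = ((q - 1) * qInt (p₁ + 1 + l * (n + (m₁ + 1)))) * S (p₁+1) (m₁+1) by ring,
    qInt_geom]
  ring
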